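/- There is an absolute constant C such that the following holds. Let D be a probability distribution over a finite set Σ with |supp(D)| ≤ r, and let η, ε, γ > 0 with γ < ε. Let n be any integer with n ≥ C·(r + 2 + log(1/η))/(ε − γ)². Suppose X_1, …, X_n ∈ Σ are possibly correlated random variables such that for every i ∈ [n] and every realization (x_1, …, x_{i−1}) of positive probability of the preceding variables, the conditional distribution of X_i given X_1 = x_1, …, X_{i−1} = x_{i−1} is within statistical distance γ of D. Then with probability at least 1 − η, the empirical distribution of the outcomes X_1, …, X_n (which assigns to each a ∈ Σ the fraction of indices i with X_i = a) is within statistical distance ε of D. -/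

import Mathlib

open Finset

/-- Probability of an event `E` on a finite probability space with mass function `μ`. -/
noncomputable def prE {Ω : Type*} [Fintype Ω] (μ : Ω → ℝ) (E : Ω → Prop) : ℝ :=
  ∑ ω, Set.indicator {ω' | E ω'} μ ω

/-- Statistical (total variation) distance between two mass functions on a finite set. -/
noncomputable def statDist {α : Type*} [Fintype α] (P Q : α → ℝ) : ℝ :=
  (∑ x, |P x - Q x|) / 2

lemma prE_eq_sum_ite {Ω : Type*} [Fintype Ω] (μ : Ω → ℝ) (E : Ω → Prop) [DecidablePred E] :
    prE μ E = ∑ ω, if E ω then μ ω else 0 := by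
  unfold prE
  refine Finset.sum_congr rfl fun ω _ => ?_
  by_cases h : E ω <;> simp [Set.indicator_apply, Set.mem_setOf_eq, h]

lemma prE_eq_sum_filter {Ω : Type*} [Fintype Ω] (μ : Ω → ℝ) (E : Ω → Prop) [DecidablePred E] :
    prE μ E = ∑ ω ∈ univ.filter E, μ ω := by
  rw [prE_eq_sum_ite, Finset.sum_filter]

lemma prE_nonneg {Ω : Type*} [Fintype Ω] {μ : Ω → ℝ} (hμ : ∀ ω, 0 ≤ μ ω) (E : Ω → Prop) :
    0 ≤ prE μ E := by
  classical
  rw [prE_eq_sum_ite]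
  exact Finset.sum_nonneg fun ω _ => by by_cases h : E ω <;> simp [h, hμ ω]

lemma prE_mono {Ω : Type*} [Fintype Ω] {μ : Ω → ℝ} (hμ : ∀ ω, 0 ≤ μ ω) {E F : Ω → Prop}
    (h : ∀ ω, E ω → F ω) : prE μ E ≤ prE μ F := by
  classical
  rw [prE_eq_sum_ite, prE_eq_sum_ite]
  refine Finset.sum_le_sum fun ω _ => ?_
  by_cases hE : E ω
  · simp [hE, h ω hE]
  · by_cases hF : F ω <;> simp [hE, hF, hμ ω]

lemma prE_compl {Ω : Type*} [Fintype Ω] (μ : Ω → ℝ) (hμ1 : ∑ ω, μ ω = 1) (E : Ω → Prop) :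
    prE μ E = 1 - prE μ (fun ω => ¬ E ω) := by
  classical
  rw [prE_eq_sum_ite, prE_eq_sum_ite, ← hμ1, eq_sub_iff_add_eq, ← Finset.sum_add_distrib]
  refine Finset.sum_congr rfl fun ω _ => ?_
  by_cases h : E ω <;> simp [h]

lemma prE_union_le {Ω ι : Type*} [Fintype Ω] {μ : Ω → ℝ} (hμ : ∀ ω, 0 ≤ μ ω)
    (s : Finset ι) (E : ι → Ω → Prop) :
    prE μ (fun ω => ∃ T ∈ s, E T ω) ≤ ∑ T ∈ s, prE μ (E T) := by
  classical
  rw [prE_eq_sum_ite]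
  have : ∀ T ∈ s, prE μ (E T) = ∑ ω, if E T ω then μ ω else 0 :=
    fun T _ => prE_eq_sum_ite μ (E T)
  rw [Finset.sum_congr rfl this, Finset.sum_comm]
  refine Finset.sum_le_sum fun ω _ => ?_
  by_cases h : ∃ T ∈ s, E T ω
  · obtain ⟨T₀, hT₀s, hT₀⟩ := h
    rw [if_pos ⟨T₀, hT₀s, hT₀⟩]
    refine le_trans (le_of_eq (if_pos hT₀).symm)
      (Finset.single_le_sum (f := fun T => if E T ω then μ ω else 0) (fun T _ => ?_) hT₀s)
    by_cases hT : E T ω <;> simp [hT, hμ ω]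
  · rw [if_neg h]
    exact Finset.sum_nonneg fun T _ => by by_cases hT : E T ω <;> simp [hT, hμ ω]

lemma prE_markov {Ω : Type*} [Fintype Ω] {μ : Ω → ℝ} (hμ : ∀ ω, 0 ≤ μ ω)
    (W : Ω → ℝ) (c l : ℝ) (hl : 0 ≤ l) :
    prE μ (fun ω => c ≤ W ω) ≤ ∑ ω, μ ω * Real.exp (l * (W ω - c)) := by
  classical
  rw [prE_eq_sum_ite]
  refine Finset.sum_le_sum fun ω _ => ?_
  by_cases h : c ≤ W ω
  · rw [if_pos h]
    nth_rewrite 1 [← mul_one (μ ω)]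
    refine mul_le_mul_of_nonneg_left ?_ (hμ ω)
    rw [← Real.exp_zero]
    exact Real.exp_le_exp.2 (mul_nonneg hl (by linarith))
  · rw [if_neg h]
    exact mul_nonneg (hμ ω) (Real.exp_pos _).le


-- e^l ≤ 1 + l + 2 l² for 0 ≤ l ≤ 1
lemma exp_le_quad {l : ℝ} (h0 : 0 ≤ l) (h1 : l ≤ 1) :
    Real.exp l ≤ 1 + l + 2 * l ^ 2 := by
  have habs : |l| ≤ 1 := abs_le.2 ⟨by linarith, h1⟩
  have h := Real.exp_bound habs (n := 2) (by norm_num)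
  have hsum : ∑ i ∈ Finset.range 2, l ^ i / (Nat.factorial i) = 1 + l := by
    simp [Finset.sum_range_succ, Nat.factorial]
  rw [hsum] at h
  norm_num [Nat.factorial] at h
  have h2 := (le_abs_self (Real.exp l - (1+l))).trans h
  have : |l| ^ 2 = l ^ 2 := sq_abs l
  nlinarith [sq_nonneg l]

lemma bern_mgf {p m l : ℝ} (hp0 : 0 ≤ p) (hp1 : p ≤ 1) (hpm : p ≤ m)
    (hl : 0 < l) (hl1 : l ≤ 1) :
    p * Real.exp (l * (1 - m)) + (1 - p) * Real.exp (l * (0 - m)) ≤ Real.exp (2 * l ^ 2) := by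
  have e0 : Real.exp (l * (1 - m)) = Real.exp l * Real.exp (l * (0 - m)) := by
    rw [← Real.exp_add]; ring_nf
  have key : p * Real.exp (l * (1 - m)) + (1 - p) * Real.exp (l * (0 - m))
      = Real.exp (l * (0 - m)) * (1 + p * (Real.exp l - 1)) := by
    rw [e0]; ring
  rw [key]
  have h1 : (1 : ℝ) + p * (Real.exp l - 1) ≤ Real.exp (p * (Real.exp l - 1)) := by
    have := Real.add_one_le_exp (p * (Real.exp l - 1))
    linarith
  have hexp1 : (0:ℝ) ≤ Real.exp l - 1 := by
    have := Real.add_one_le_exp l; nlinarith [hl.le]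
  have h2 : Real.exp (l * (0 - m)) * (1 + p * (Real.exp l - 1))
      ≤ Real.exp (l * (0 - m)) * Real.exp (p * (Real.exp l - 1)) := by
    refine mul_le_mul_of_nonneg_left h1 (Real.exp_pos _).le
  refine h2.trans ?_
  rw [← Real.exp_add]
  refine Real.exp_le_exp.2 ?_
  have hq := exp_le_quad hl.le hl1
  -- l*(0-m) + p*(exp l - 1) ≤ 2 l²
  rcases le_total m 1 with hm1 | hm1
  · have : p * (Real.exp l - 1) ≤ m * (l + 2 * l ^ 2) := by
      have h3 : Real.exp l - 1 ≤ l + 2 * l ^ 2 := by linarith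
      have : p * (Real.exp l - 1) ≤ m * (Real.exp l - 1) :=
        mul_le_mul_of_nonneg_right hpm hexp1
      nlinarith [hp0.trans hpm]
    nlinarith [hp0.trans hpm, sq_nonneg l]
  · have h3 : p * (Real.exp l - 1) ≤ l + 2 * l ^ 2 := by
      have : p * (Real.exp l - 1) ≤ 1 * (Real.exp l - 1) :=
        mul_le_mul_of_nonneg_right hp1 hexp1
      linarith
    nlinarith [hl.le]

lemma sum_sub_le_statDist {α : Type*} [Fintype α] (P Q : α → ℝ)
    (hsum : ∑ a, P a = ∑ a, Q a) (S : Finset α) :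
    ∑ a ∈ S, P a - ∑ a ∈ S, Q a ≤ statDist P Q := by
  classical
  have h0 : ∑ a ∈ S, (P a - Q a) + ∑ a ∈ Sᶜ, (P a - Q a) = 0 := by
    rw [Finset.sum_add_sum_compl, Finset.sum_sub_distrib, hsum, sub_self]
  have h1 : ∑ a ∈ S, (P a - Q a) ≤ ∑ a ∈ S, |P a - Q a| :=
    Finset.sum_le_sum fun a _ => le_abs_self _
  have h2 : -∑ a ∈ Sᶜ, (P a - Q a) ≤ ∑ a ∈ Sᶜ, |P a - Q a| := by
    rw [← Finset.sum_neg_distrib]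
    exact Finset.sum_le_sum fun a _ => neg_le_abs _
  have h3 : ∑ a ∈ S, |P a - Q a| + ∑ a ∈ Sᶜ, |P a - Q a| = ∑ a, |P a - Q a| :=
    Finset.sum_add_sum_compl S _
  have hd : ∑ a ∈ S, P a - ∑ a ∈ S, Q a = ∑ a ∈ S, (P a - Q a) :=
    (Finset.sum_sub_distrib _ _).symm
  rw [hd]
  unfold statDist
  linarith

lemma statDist_decomp {α : Type*} [Fintype α] [DecidableEq α] (P Q : α → ℝ)
    (hP : ∀ a, 0 ≤ P a) (hsum : ∑ a, P a = ∑ a, Q a) :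
    ∃ T ∈ (univ.filter (fun a => Q a ≠ 0)).powerset,
      statDist P Q ≤ ∑ a ∈ T ∪ (univ \ univ.filter (fun a => Q a ≠ 0)), (P a - Q a) := by
  classical
  set supp := univ.filter (fun a => Q a ≠ 0) with hsupp
  set Sstar := univ.filter (fun a => Q a < P a) with hSstar
  refine ⟨Sstar ∩ supp, Finset.mem_powerset.2 (Finset.inter_subset_right), ?_⟩
  -- statDist = ∑_{Sstar} (P - Q)
  have hzero : ∑ a ∈ Sstar, (P a - Q a) + ∑ a ∈ Sstarᶜ, (P a - Q a) = 0 := by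
    rw [Finset.sum_add_sum_compl, Finset.sum_sub_distrib, hsum, sub_self]
  have habs1 : ∑ a ∈ Sstar, |P a - Q a| = ∑ a ∈ Sstar, (P a - Q a) := by
    refine Finset.sum_congr rfl fun a ha => ?_
    rw [hSstar, Finset.mem_filter] at ha
    exact abs_of_pos (by linarith [ha.2])
  have habs2 : ∑ a ∈ Sstarᶜ, |P a - Q a| = -∑ a ∈ Sstarᶜ, (P a - Q a) := by
    rw [← Finset.sum_neg_distrib]
    refine Finset.sum_congr rfl fun a ha => ?_
    rw [Finset.mem_compl] at ha
    have hnlt : ¬ (Q a < P a) := fun h => ha (by rw [hSstar]; exact Finset.mem_filter.2 ⟨Finset.mem_univ a, h⟩)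
    rw [abs_of_nonpos (by linarith [not_lt.1 hnlt])]
  have heq : statDist P Q = ∑ a ∈ Sstar, (P a - Q a) := by
    unfold statDist
    rw [← Finset.sum_add_sum_compl Sstar, habs1, habs2]
    linarith
  rw [heq]
  -- now bound ∑_{Sstar} (P-Q) ≤ ∑_{T ∪ suppᶜ} (P-Q)
  have hsplit : Sstar = (Sstar ∩ supp) ∪ (Sstar \ supp) := by
    rw [Finset.union_comm, Finset.sdiff_union_inter]
  have hdisj1 : Disjoint (Sstar ∩ supp) (Sstar \ supp) :=
    Finset.disjoint_left.2 fun a ha hb => (Finset.mem_sdiff.1 hb).2 (Finset.mem_inter.1 ha).2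
  have hdisj2 : Disjoint (Sstar ∩ supp) (univ \ supp) :=
    Finset.disjoint_left.2 fun a ha hb => (Finset.mem_sdiff.1 hb).2 (Finset.mem_inter.1 ha).2
  rw [Finset.sum_union hdisj2]
  nth_rewrite 1 [hsplit]
  rw [Finset.sum_union hdisj1]
  refine add_le_add le_rfl ?_
  refine Finset.sum_le_sum_of_subset_of_nonneg ?_ ?_
  · exact Finset.sdiff_subset_sdiff (Finset.subset_univ _) le_rfl
  · intro a ha _
    have : Q a = 0 := by
      have := (Finset.mem_sdiff.1 ha).2
      rw [hsupp, Finset.mem_filter] at this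
      push_neg at this
      exact this (Finset.mem_univ a)
    rw [this, sub_zero]
    exact hP a

lemma prE_partition {σ Ω : Type*} [Fintype σ] [DecidableEq σ] [Fintype Ω]
    (μ : Ω → ℝ) (Y : Ω → σ) (E : Ω → Prop) :
    ∑ a, prE μ (fun ω => Y ω = a ∧ E ω) = prE μ E := by
  classical
  have : ∀ a, prE μ (fun ω => Y ω = a ∧ E ω) = ∑ ω, if Y ω = a ∧ E ω then μ ω else 0 :=
    fun a => prE_eq_sum_ite μ _
  rw [Finset.sum_congr rfl (fun a _ => this a), Finset.sum_comm, prE_eq_sum_ite]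
  refine Finset.sum_congr rfl fun ω _ => ?_
  by_cases hE : E ω
  · simp [hE]
  · simp [hE]

lemma mgf_bound {σ Ω : Type*} [Fintype σ] [DecidableEq σ] [Nonempty σ] [Fintype Ω]
    (μ : Ω → ℝ) (hμ0 : ∀ ω, 0 ≤ μ ω) (hμ1 : ∑ ω, μ ω = 1)
    {n : ℕ} (X : Fin n → Ω → σ) (S : Finset σ) (m l : ℝ)
    (hm : 0 ≤ m) (hl : 0 < l) (hl1 : l ≤ 1)
    (hcond : ∀ (i : Fin n) (v : Fin n → σ),
      0 < prE μ (fun ω => ∀ j, j < i → X j ω = v j) →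
      ∑ a ∈ S, prE μ (fun ω => X i ω = a ∧ ∀ j, j < i → X j ω = v j) ≤
        m * prE μ (fun ω => ∀ j, j < i → X j ω = v j)) :
    ∀ k, k ≤ n → ∑ ω, μ ω * ∏ i ∈ univ.filter (fun i : Fin n => (i : ℕ) < k),
        Real.exp (l * ((if X i ω ∈ S then (1:ℝ) else 0) - m)) ≤ Real.exp (2 * l ^ 2) ^ k := by
  classical
  intro k
  induction k with
  | zero =>
    intro _
    have : univ.filter (fun i : Fin n => (i : ℕ) < 0) = ∅ := by
      refine Finset.filter_eq_empty_iff.2 fun i _ => by omega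
    simp [this, hμ1]
  | succ k ih =>
    intro hk1
    have hk : k < n := hk1
    have ihk := ih (le_of_lt hk)
    set i₀ : Fin n := ⟨k, hk⟩ with hi₀
    set B := Real.exp (2 * l ^ 2) with hB
    have hBpos : 0 < B := Real.exp_pos _
    set g : Ω → ℝ := fun ω => Real.exp (l * ((if X i₀ ω ∈ S then (1:ℝ) else 0) - m)) with hg
    set F : Ω → ℝ := fun ω => ∏ i ∈ univ.filter (fun i : Fin n => (i:ℕ) < k),
        Real.exp (l * ((if X i ω ∈ S then (1:ℝ) else 0) - m)) with hF
    obtain ⟨a₀⟩ := ‹Nonempty σ›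
    set f : Ω → (Fin n → σ) := fun ω j => if (j:ℕ) < k then X j ω else a₀ with hf
    set c : (Fin n → σ) → ℝ := fun v => ∏ i ∈ univ.filter (fun i : Fin n => (i:ℕ) < k),
        Real.exp (l * ((if v i ∈ S then (1:ℝ) else 0) - m)) with hc
    have hcnn : ∀ v, 0 ≤ c v := fun v => Finset.prod_nonneg fun i _ => (Real.exp_pos _).le
    have hFc : ∀ v : Fin n → σ, ∀ ω ∈ univ.filter (fun ω => f ω = v), F ω = c v := by
      intro v ω hω
      rw [Finset.mem_filter] at hω
      refine Finset.prod_congr rfl fun i hi => ?_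
      have hik : (i:ℕ) < k := (Finset.mem_filter.1 hi).2
      have : X i ω = v i := by
        rw [← hω.2]; simp [hf, hik]
      rw [this]
    have hfilter : univ.filter (fun i : Fin n => (i:ℕ) < k + 1)
        = insert i₀ (univ.filter (fun i : Fin n => (i:ℕ) < k)) := by
      ext j
      simp only [Finset.mem_filter, Finset.mem_insert, Finset.mem_univ, true_and,
        Fin.ext_iff, hi₀]
      omega
    have hnotmem : i₀ ∉ univ.filter (fun i : Fin n => (i:ℕ) < k) := by
      simp [hi₀]
    -- key per-fiber estimate
    have key : ∀ v : Fin n → σ,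
        ∑ ω ∈ univ.filter (fun ω => f ω = v), μ ω * g ω
          ≤ B * ∑ ω ∈ univ.filter (fun ω => f ω = v), μ ω := by
      intro v
      by_cases htail : ∀ j : Fin n, ¬((j:ℕ) < k) → v j = a₀
      · -- fiber equals the prefix event
        have hfib : univ.filter (fun ω => f ω = v)
            = univ.filter (fun ω => ∀ j, j < i₀ → X j ω = v j) := by
          ext ω
          simp only [Finset.mem_filter, Finset.mem_univ, true_and]
          constructor
          · intro h j hj
            have hjk : (j:ℕ) < k := by
              have := hj
              rw [Fin.lt_def] at this
              simpa [hi₀] using this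
            rw [← h]; simp [hf, hjk]
          · intro h
            funext j
            by_cases hjk : (j:ℕ) < k
            · have hj : j < i₀ := by rw [Fin.lt_def]; simpa [hi₀] using hjk
              simp [hf, hjk, h j hj]
            · simp [hf, hjk, (htail j hjk).symm]
        rw [hfib]
        set Ev : Ω → Prop := fun ω => ∀ j, j < i₀ → X j ω = v j with hEv
        have hPsum : prE μ Ev = ∑ ω ∈ univ.filter Ev, μ ω := prE_eq_sum_filter μ Ev
        rcases lt_or_ge 0 (prE μ Ev) with hP | hP
        · -- positive probability: use hcond
          have hS := hcond i₀ v hP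
          set N : σ → ℝ := fun a => prE μ (fun ω => X i₀ ω = a ∧ Ev ω) with hN
          have hNnn : ∀ a, 0 ≤ N a := fun a => prE_nonneg hμ0 _
          have hNsum : ∑ a, N a = prE μ Ev := prE_partition μ (fun ω => X i₀ ω) Ev
          set P := prE μ Ev with hPdef
          have hdecomp : ∑ ω ∈ univ.filter Ev, μ ω * g ω
              = ∑ a, N a * Real.exp (l * ((if a ∈ S then (1:ℝ) else 0) - m)) := by
            rw [← Finset.sum_fiberwise (univ.filter Ev) (fun ω => X i₀ ω)
              (fun ω => μ ω * g ω)]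
            refine Finset.sum_congr rfl fun a _ => ?_
            have hNa : N a = ∑ ω ∈ (univ.filter Ev).filter (fun ω => X i₀ ω = a), μ ω := by
              show prE μ (fun ω => X i₀ ω = a ∧ Ev ω)
                = ∑ ω ∈ (univ.filter Ev).filter (fun ω => X i₀ ω = a), μ ω
              rw [prE_eq_sum_filter μ (fun ω => X i₀ ω = a ∧ Ev ω), Finset.filter_filter]
              congr 1
              ext ω
              simp [and_comm]
            rw [hNa, Finset.sum_mul]
            refine Finset.sum_congr rfl fun ω hω => ?_
            have hXa : X i₀ ω = a := (Finset.mem_filter.1 hω).2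
            rw [hg]
            simp only
            rw [hXa]
          rw [hdecomp, ← hPsum]
          set NS := ∑ a ∈ S, N a with hNS
          have hNS0 : 0 ≤ NS := Finset.sum_nonneg fun a _ => hNnn a
          have hNSm : NS ≤ m * P := hS
          have hNSP : NS ≤ P := by
            rw [← hNsum]
            exact Finset.sum_le_sum_of_subset_of_nonneg (Finset.subset_univ S)
              (fun a _ _ => hNnn a)
          have hsplit2 : ∑ a, N a * Real.exp (l * ((if a ∈ S then (1:ℝ) else 0) - m))
              = NS * Real.exp (l * (1 - m)) + (P - NS) * Real.exp (l * (0 - m)) := by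
            rw [← Finset.sum_add_sum_compl S]
            congr 1
            · rw [hNS, Finset.sum_mul]
              refine Finset.sum_congr rfl fun a ha => by rw [if_pos ha]
            · have hPNS : P - NS = ∑ a ∈ Sᶜ, N a := by
                rw [hNS, ← hNsum, ← Finset.sum_add_sum_compl S N]
                ring
              rw [hPNS, Finset.sum_mul]
              refine Finset.sum_congr rfl fun a ha => by
                rw [if_neg (Finset.mem_compl.1 ha)]
          rw [hsplit2]
          -- scalar estimate
          have hE10 : Real.exp (l * (0 - m)) ≤ Real.exp (l * (1 - m)) :=
            Real.exp_le_exp.2 (by nlinarith)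
          have hq : NS ≤ P * min m 1 := by
            rcases le_total m 1 with h1 | h1
            · rw [min_eq_left h1]; nlinarith
            · rw [min_eq_right h1]; nlinarith
          have hbern : min m 1 * Real.exp (l * (1 - m))
              + (1 - min m 1) * Real.exp (l * (0 - m)) ≤ B :=
            bern_mgf (le_min hm zero_le_one) (min_le_right m 1) (min_le_left m 1) hl hl1
          nlinarith [mul_le_mul_of_nonneg_right hq (sub_nonneg.2 hE10),
            mul_le_mul_of_nonneg_left hbern hP.le]
        · -- zero probability: all masses vanish
          have hPz : prE μ Ev = 0 := le_antisymm hP (prE_nonneg hμ0 Ev)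
          have hz : ∀ ω ∈ univ.filter Ev, μ ω = 0 := by
            rw [hPsum] at hPz
            exact (Finset.sum_eq_zero_iff_of_nonneg fun ω _ => hμ0 ω).1 hPz
          rw [Finset.sum_eq_zero fun ω hω => by rw [hz ω hω, zero_mul],
            Finset.sum_eq_zero hz, mul_zero]
      · -- fiber is empty
        push_neg at htail
        obtain ⟨j, hj, hja⟩ := htail
        have hempty : univ.filter (fun ω => f ω = v) = ∅ := by
          refine Finset.filter_eq_empty_iff.2 fun ω _ => ?_
          intro hfv
          apply hja
          rw [← hfv]
          simp [hf, hj]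
        rw [hempty]
        simp
    calc ∑ ω, μ ω * ∏ i ∈ univ.filter (fun i : Fin n => (i:ℕ) < k + 1),
          Real.exp (l * ((if X i ω ∈ S then (1:ℝ) else 0) - m))
        = ∑ ω, μ ω * (g ω * F ω) := by
          refine Finset.sum_congr rfl fun ω _ => ?_
          rw [hfilter, Finset.prod_insert hnotmem]
      _ = ∑ v : Fin n → σ, ∑ ω ∈ univ.filter (fun ω => f ω = v), μ ω * (g ω * F ω) :=
          (Finset.sum_fiberwise univ f _).symm
      _ = ∑ v : Fin n → σ, c v * ∑ ω ∈ univ.filter (fun ω => f ω = v), μ ω * g ω := by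
          refine Finset.sum_congr rfl fun v _ => ?_
          rw [Finset.mul_sum]
          refine Finset.sum_congr rfl fun ω hω => ?_
          rw [hFc v ω hω]; ring
      _ ≤ ∑ v : Fin n → σ, c v * (B * ∑ ω ∈ univ.filter (fun ω => f ω = v), μ ω) := by
          refine Finset.sum_le_sum fun v _ => mul_le_mul_of_nonneg_left (key v) (hcnn v)
      _ = B * ∑ v : Fin n → σ, ∑ ω ∈ univ.filter (fun ω => f ω = v), μ ω * F ω := by
          rw [Finset.mul_sum]
          refine Finset.sum_congr rfl fun v _ => ?_
          have h1 : ∑ ω ∈ univ.filter (fun ω => f ω = v), μ ω * F ω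
              = c v * ∑ ω ∈ univ.filter (fun ω => f ω = v), μ ω := by
            rw [Finset.mul_sum]
            refine Finset.sum_congr rfl fun ω hω => ?_
            rw [hFc v ω hω]; ring
          rw [h1]; ring
      _ = B * ∑ ω, μ ω * F ω := by rw [Finset.sum_fiberwise]
      _ ≤ B * B ^ k := mul_le_mul_of_nonneg_left ihk hBpos.le
      _ = B ^ (k + 1) := by ring

lemma card_filter_mem {ι σ : Type*} [Fintype ι] [DecidableEq σ] (f : ι → σ) (S : Finset σ) :
    (univ.filter fun i => f i ∈ S).card = ∑ a ∈ S, (univ.filter fun i => f i = a).card := by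
  classical
  rw [Finset.card_eq_sum_card_fiberwise (f := f) (s := univ.filter fun i => f i ∈ S) (t := S)
    (fun i hi => (Finset.mem_filter.1 hi).2)]
  refine Finset.sum_congr rfl fun a ha => ?_
  congr 1
  rw [Finset.filter_filter]
  ext i
  simp only [Finset.mem_filter, Finset.mem_univ, true_and]
  exact ⟨fun h => h.2, fun h => ⟨h ▸ ha, h⟩⟩

lemma sum_card_fiber {ι σ : Type*} [Fintype ι] [Fintype σ] [DecidableEq σ] (f : ι → σ) :
    ∑ a, (univ.filter fun i => f i = a).card = Fintype.card ι := by
  classical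
  rw [← Finset.card_eq_sum_card_fiberwise (f := f) (t := univ) (fun i _ => Finset.mem_univ _),
    Finset.card_univ]


/-- There is an absolute constant `C` such that the following
holds. Let `D` be a distribution over a finite set `σ` with `|supp(D)| ≤ r`, let
`η, ε, γ > 0` with `γ < ε`, and let `n ≥ C·(r + 2 + log(1/η))/(ε − γ)²`. If
`X₁, …, Xₙ ∈ σ` are possibly correlated random variables such that, conditioned on
any realization of the preceding variables of positive probability, the
conditional distribution of `Xᵢ` is within statistical distance `γ` of `D`, then
with probability at least `1 − η` the empirical distribution of `X₁, …, Xₙ` is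
within statistical distance `ε` of `D`. -/
theorem empirical_distribution_of_fuzzy_samples :
    ∃ C : ℝ, 0 < C ∧
    ∀ (σ : Type) [Fintype σ] [DecidableEq σ],
    ∀ D : σ → ℝ, (∀ a, 0 ≤ D a) → (∑ a, D a) = 1 →
    ∀ r : ℕ, (univ.filter (fun a => D a ≠ 0)).card ≤ r →
    ∀ η ε γ : ℝ, 0 < η → 0 < ε → 0 < γ → γ < ε →
    ∀ n : ℕ, C * (((r : ℝ) + 2 + Real.logb 2 (1/η)) / (ε - γ) ^ 2) ≤ (n : ℝ) →
    ∀ (Ω : Type) [Fintype Ω],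
    ∀ μ : Ω → ℝ, (∀ ω, 0 ≤ μ ω) → (∑ ω, μ ω) = 1 →
    ∀ X : Fin n → Ω → σ,
    (∀ i : Fin n, ∀ v : Fin n → σ,
      0 < prE μ (fun ω => ∀ j, j < i → X j ω = v j) →
      statDist (fun a => prE μ (fun ω => X i ω = a ∧ ∀ j, j < i → X j ω = v j) /
        prE μ (fun ω => ∀ j, j < i → X j ω = v j)) D ≤ γ) →
    1 - η ≤ prE μ (fun ω =>
      statDist (fun a => ((univ.filter (fun i : Fin n => X i ω = a)).card : ℝ) / (n : ℝ))
        D ≤ ε) := by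
  classical
  refine ⟨8, by norm_num, ?_⟩
  intro σ _ _ D hD0 hD1 r hr η ε γ hη hε hγ hγε n hn Ω _ μ hμ0 hμ1 X hX
  have hσ : Nonempty σ := by
    by_contra h
    rw [not_nonempty_iff] at h
    rw [Finset.univ_eq_empty, Finset.sum_empty] at hD1
    norm_num at hD1
  -- empirical distribution facts
  set emp : Ω → σ → ℝ :=
    fun ω a => ((univ.filter (fun i : Fin n => X i ω = a)).card : ℝ) / (n : ℝ) with hemp
  show 1 - η ≤ prE μ (fun ω => statDist (emp ω) D ≤ ε)
  have hempnn : ∀ ω a, 0 ≤ emp ω a := fun ω a =>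
    div_nonneg (Nat.cast_nonneg _) (Nat.cast_nonneg _)
  have hempsum_le : ∀ ω, ∑ a, emp ω a ≤ 1 := by
    intro ω
    rw [hemp]
    simp only
    rw [← Finset.sum_div]
    have hcast : ∑ a, ((univ.filter (fun i : Fin n => X i ω = a)).card : ℝ) = (n : ℝ) := by
      rw [← Nat.cast_sum]
      rw [sum_card_fiber (fun i : Fin n => X i ω), Fintype.card_fin]
    rw [hcast]
    rcases Nat.eq_zero_or_pos n with h0 | h0
    · simp [h0]
    · rw [div_self (by exact_mod_cast h0.ne')]
  -- trivial case η ≥ 1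
  rcases le_or_gt 1 η with hη1 | hη1
  · exact le_trans (by linarith) (prE_nonneg hμ0 _)
  -- trivial case ε > 1
  rcases le_or_gt ε 1 with hε1 | hε1
  swap
  · have hall : ∀ ω : Ω, statDist (emp ω) D ≤ ε := by
      intro ω
      have habs : ∑ x, |emp ω x - D x| ≤ ∑ x, (emp ω x + D x) :=
        Finset.sum_le_sum fun a _ => (abs_sub _ _).trans
          (by rw [abs_of_nonneg (hempnn ω a), abs_of_nonneg (hD0 a)])
      rw [Finset.sum_add_distrib, hD1] at habs
      unfold statDist
      linarith [hempsum_le ω]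
    have h1 : prE μ (fun ω => statDist (emp ω) D ≤ ε) = 1 := by
      rw [prE_eq_sum_ite, ← hμ1]
      exact Finset.sum_congr rfl fun ω _ => if_pos (hall ω)
    rw [h1]; linarith
  -- main case
  set t := ε - γ with ht
  have ht0 : 0 < t := by rw [ht]; linarith
  have ht1 : t ≤ 1 := by rw [ht]; linarith
  set l := t / 4 with hldef
  have hl0 : 0 < l := by rw [hldef]; linarith
  have hl1 : l ≤ 1 := by rw [hldef]; linarith
  -- numeric preparation
  have hlog2pos : 0 < Real.log 2 := Real.log_pos (by norm_num)
  have hlog2lt1 : Real.log 2 < 1 := by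
    have := Real.log_two_lt_d9; linarith
  have hL : 0 < Real.log (1 / η) := Real.log_pos ((one_lt_div hη).2 hη1)
  have ht2 : 0 < t ^ 2 := pow_pos ht0 2
  have h8 : 8 * ((r : ℝ) + 2 + Real.log (1 / η) / Real.log 2) ≤ (n : ℝ) * t ^ 2 := by
    rw [Real.logb] at hn
    rw [mul_div_assoc'] at hn
    rw [div_le_iff₀ ht2] at hn
    linarith
  have hlogdiv : Real.log (1 / η) ≤ Real.log (1 / η) / Real.log 2 := by
    rw [le_div_iff₀ hlog2pos]
    nlinarith
  have hnkey : (r : ℝ) * Real.log 2 + Real.log (1 / η) ≤ (n : ℝ) * t ^ 2 / 8 := by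
    have hrnn : (0:ℝ) ≤ (r:ℝ) := Nat.cast_nonneg r
    nlinarith
  have hn16 : (16 : ℝ) ≤ (n : ℝ) := by nlinarith [(Nat.cast_nonneg r : (0:ℝ) ≤ (r:ℝ))]
  have hnR : (0 : ℝ) < (n : ℝ) := by linarith
  have hnpos : 0 < n := by exact_mod_cast hnR
  have hempsum : ∀ ω, ∑ a, emp ω a = 1 := by
    intro ω
    rw [hemp]
    simp only
    rw [← Finset.sum_div]
    have hcast : ∑ a, ((univ.filter (fun i : Fin n => X i ω = a)).card : ℝ) = (n : ℝ) := by
      rw [← Nat.cast_sum, sum_card_fiber (fun i : Fin n => X i ω), Fintype.card_fin]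
    rw [hcast, div_self hnR.ne']
  -- the bad events
  set supp := univ.filter (fun a => D a ≠ 0) with hsupp
  set ST : Finset σ → Finset σ := fun T => T ∪ (univ \ supp) with hSTdef
  set Bad : Finset σ → Ω → Prop := fun T ω =>
    (n : ℝ) * ((∑ a ∈ ST T, D a) + γ + t)
      ≤ ((univ.filter fun i : Fin n => X i ω ∈ ST T).card : ℝ) with hBad
  -- per-T tail bound
  have hTbound : ∀ T : Finset σ, prE μ (Bad T) ≤ Real.exp (-((n : ℝ) * t ^ 2 / 8)) := by
    intro T
    set S := ST T with hSdef
    set m := (∑ a ∈ S, D a) + γ with hmdef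
    have hm0 : 0 ≤ m := add_nonneg (Finset.sum_nonneg fun a _ => hD0 a) hγ.le
    have hcond : ∀ (i : Fin n) (v : Fin n → σ),
        0 < prE μ (fun ω => ∀ j, j < i → X j ω = v j) →
        ∑ a ∈ S, prE μ (fun ω => X i ω = a ∧ ∀ j, j < i → X j ω = v j) ≤
          m * prE μ (fun ω => ∀ j, j < i → X j ω = v j) := by
      intro i v hP
      have hstat := hX i v hP
      set P := prE μ (fun ω => ∀ j, j < i → X j ω = v j) with hPdef
      set Q : σ → ℝ := fun a =>
        prE μ (fun ω => X i ω = a ∧ ∀ j, j < i → X j ω = v j) / P with hQdef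
      have hQsum : ∑ a, Q a = 1 := by
        rw [hQdef]
        simp only
        rw [← Finset.sum_div, prE_partition μ (fun ω => X i ω)
          (fun ω => ∀ j, j < i → X j ω = v j), div_self hP.ne']
      have hhalf := sum_sub_le_statDist Q D (by rw [hQsum, hD1]) S
      have h1 : ∑ a ∈ S, Q a ≤ ∑ a ∈ S, D a + γ := by linarith
      have h2 : ∑ a ∈ S, Q a
          = (∑ a ∈ S, prE μ (fun ω => X i ω = a ∧ ∀ j, j < i → X j ω = v j)) / P := by
        rw [hQdef, Finset.sum_div]
      rw [h2, div_le_iff₀ hP] at h1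
      calc ∑ a ∈ S, prE μ (fun ω => X i ω = a ∧ ∀ j, j < i → X j ω = v j)
          ≤ (∑ a ∈ S, D a + γ) * P := h1
        _ = m * P := by rw [hmdef]
    have hmgf := mgf_bound μ hμ0 hμ1 X S m l hm0 hl0 hl1 hcond n le_rfl
    set W : Ω → ℝ := fun ω => ((univ.filter fun i : Fin n => X i ω ∈ S).card : ℝ) with hW
    have hmark := prE_markov hμ0 W ((n : ℝ) * (m + t)) l hl0.le
    have huniv : univ.filter (fun i : Fin n => (i : ℕ) < n) = univ := by
      refine Finset.filter_true_of_mem fun i _ => i.is_lt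
    have hWω : ∀ ω, ∑ i : Fin n, (if X i ω ∈ S then (1:ℝ) else 0) = W ω := by
      intro ω
      rw [Finset.sum_boole, hW]
    have hconn : ∀ ω, μ ω * Real.exp (l * (W ω - (n : ℝ) * (m + t)))
        = Real.exp (-(l * (n : ℝ) * t)) *
          (μ ω * ∏ i ∈ univ.filter (fun i : Fin n => (i : ℕ) < n),
            Real.exp (l * ((if X i ω ∈ S then (1:ℝ) else 0) - m))) := by
      intro ω
      rw [huniv, ← Real.exp_sum]
      have hexp : ∑ i : Fin n, l * ((if X i ω ∈ S then (1:ℝ) else 0) - m)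
          = l * W ω - (n : ℝ) * (l * m) := by
        calc ∑ i : Fin n, l * ((if X i ω ∈ S then (1:ℝ) else 0) - m)
            = (∑ i : Fin n, l * (if X i ω ∈ S then (1:ℝ) else 0))
              - ∑ _i : Fin n, l * m := by
              rw [← Finset.sum_sub_distrib]
              exact Finset.sum_congr rfl fun i _ => by ring
          _ = l * W ω - (n : ℝ) * (l * m) := by
              rw [← Finset.mul_sum, hWω ω, Finset.sum_const, Finset.card_univ,
                Fintype.card_fin, nsmul_eq_mul]
      rw [hexp]
      have harg : l * (W ω - (n : ℝ) * (m + t))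
          = -(l * (n : ℝ) * t) + (l * W ω - (n : ℝ) * (l * m)) := by ring
      rw [harg, Real.exp_add]
      ring
    calc prE μ (Bad T)
        ≤ ∑ ω, μ ω * Real.exp (l * (W ω - (n : ℝ) * (m + t))) := hmark
      _ = Real.exp (-(l * (n : ℝ) * t)) *
          ∑ ω, μ ω * ∏ i ∈ univ.filter (fun i : Fin n => (i : ℕ) < n),
            Real.exp (l * ((if X i ω ∈ S then (1:ℝ) else 0) - m)) := by
          rw [Finset.mul_sum]
          exact Finset.sum_congr rfl fun ω _ => hconn ω
      _ ≤ Real.exp (-(l * (n : ℝ) * t)) * Real.exp (2 * l ^ 2) ^ n :=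
          mul_le_mul_of_nonneg_left hmgf (Real.exp_pos _).le
      _ = Real.exp (-(l * (n : ℝ) * t) + (n : ℝ) * (2 * l ^ 2)) := by
          rw [← Real.exp_nat_mul, ← Real.exp_add]
      _ ≤ Real.exp (-((n : ℝ) * t ^ 2 / 8)) := by
          refine Real.exp_le_exp.2 (le_of_eq ?_)
          rw [hldef]; ring
  -- covering: failure implies some bad event
  have hcover : ∀ ω : Ω, ¬ (statDist (emp ω) D ≤ ε) → ∃ T ∈ supp.powerset, Bad T ω := by
    intro ω hbadω
    obtain ⟨T, hTmem, hTle⟩ := statDist_decomp (emp ω) D (hempnn ω)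
      (by rw [hempsum ω, hD1])
    rw [← hsupp] at hTmem hTle
    refine ⟨T, hTmem, ?_⟩
    have h1 : ε < ∑ a ∈ ST T, (emp ω a - D a) := lt_of_lt_of_le (not_le.1 hbadω) hTle
    rw [Finset.sum_sub_distrib] at h1
    have h2 : ∑ a ∈ ST T, emp ω a
        = ((univ.filter fun i : Fin n => X i ω ∈ ST T).card : ℝ) / (n : ℝ) := by
      rw [hemp]
      simp only
      rw [← Finset.sum_div]
      congr 1
      rw [card_filter_mem (fun i : Fin n => X i ω) (ST T)]
      push_cast
      rfl
    rw [h2] at h1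
    rw [hBad]
    simp only
    have h3 : (∑ a ∈ ST T, D a) + γ + t
        < ((univ.filter fun i : Fin n => X i ω ∈ ST T).card : ℝ) / (n : ℝ) := by
      have : ε = γ + t := by rw [ht]; ring
      linarith
    rw [mul_comm]
    exact le_of_lt ((lt_div_iff₀ hnR).1 h3)
  -- union bound
  have hunion : prE μ (fun ω => ¬ (statDist (emp ω) D ≤ ε))
      ≤ ∑ T ∈ supp.powerset, prE μ (Bad T) :=
    le_trans (prE_mono hμ0 fun ω h => hcover ω h) (prE_union_le hμ0 _ _)
  have hsum_le : ∑ T ∈ supp.powerset, prE μ (Bad T)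
      ≤ (2 : ℝ) ^ r * Real.exp (-((n : ℝ) * t ^ 2 / 8)) := by
    have h1 : ∑ T ∈ supp.powerset, prE μ (Bad T)
        ≤ ∑ _T ∈ supp.powerset, Real.exp (-((n : ℝ) * t ^ 2 / 8)) :=
      Finset.sum_le_sum fun T _ => hTbound T
    rw [Finset.sum_const, nsmul_eq_mul, Finset.card_powerset] at h1
    push_cast at h1
    refine h1.trans (mul_le_mul_of_nonneg_right ?_ (Real.exp_pos _).le)
    exact pow_le_pow_right₀ (by norm_num) hr
  have hexpbound : (2 : ℝ) ^ r * Real.exp (-((n : ℝ) * t ^ 2 / 8)) ≤ η := by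
    have h1 : Real.exp (-((n : ℝ) * t ^ 2 / 8))
        ≤ Real.exp (-((r : ℝ) * Real.log 2 + Real.log (1 / η))) :=
      Real.exp_le_exp.2 (by linarith)
    have h2 : Real.exp (-((r : ℝ) * Real.log 2 + Real.log (1 / η)))
        = ((2 : ℝ) ^ r)⁻¹ * η := by
      rw [neg_add, Real.exp_add]
      congr 1
      · rw [Real.exp_neg, Real.exp_nat_mul, Real.exp_log (by norm_num : (0:ℝ) < 2)]
      · rw [Real.exp_neg, Real.exp_log (by positivity : (0:ℝ) < 1 / η), one_div, inv_inv]
    have h2r : (0:ℝ) < (2:ℝ) ^ r := by positivity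
    calc (2 : ℝ) ^ r * Real.exp (-((n : ℝ) * t ^ 2 / 8))
        ≤ (2 : ℝ) ^ r * (((2 : ℝ) ^ r)⁻¹ * η) := by
          rw [← h2]; exact mul_le_mul_of_nonneg_left h1 h2r.le
      _ = η := by field_simp
  rw [prE_compl μ hμ1 (fun ω => statDist (emp ω) D ≤ ε)]
  have hfinal := hunion.trans (hsum_le.trans hexpbound)
  linarith
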